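/- Let I ⊆ R = C[x_1,...,x_N] be a monomial ideal, where R carries a positive multigrading with x_i of weight w_i, and let Ĩ ⊆ R̃ be the polarization of I, where each new variable x_{ik} is assigned the weight w_i. Then K_{R/I}(t) = K_{R̃/Ĩ}(t); in particular, mdeg_{R/I}(t) = mdeg_{R̃/Ĩ}(t). -/

import Mathlib

open MvPolynomial

attribute [local instance] Classical.propDecidable

/-- dim_C of the multidegree-`a` piece of `R/I` for weights `w`. -/
noncomputable def mgradedDim {τ : Type*} {d : ℕ} (w : τ → (Fin d →₀ ℕ))
    (I : Ideal (MvPolynomial τ ℂ)) (a : Fin d →₀ ℕ) : ℕ :=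
  Module.finrank ℂ ((MvPolynomial.weightedHomogeneousSubmodule ℂ w a).map
    (Ideal.Quotient.mkₐ ℂ I).toLinearMap)

/-- The multigraded Hilbert series of `R/I` as a multivariate power series. -/
noncomputable def hilbSeries {τ : Type*} {d : ℕ} (w : τ → (Fin d →₀ ℕ))
    (I : Ideal (MvPolynomial τ ℂ)) : MvPowerSeries (Fin d) ℤ :=
  fun a => (mgradedDim w I a : ℤ)

/-- `K` is the multigraded K-polynomial of `R/I`:
`K(t) = ∏ᵢ (1 - t^{wᵢ}) · HS_{R/I}(t)` as multivariate power series. -/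
noncomputable def IsKPolynomial {τ : Type*} [Fintype τ] {d : ℕ} (w : τ → (Fin d →₀ ℕ))
    (I : Ideal (MvPolynomial τ ℂ)) (K : MvPolynomial (Fin d) ℤ) : Prop :=
  (K : MvPowerSeries (Fin d) ℤ) =
    ((∏ v : τ, (1 - MvPolynomial.monomial (w v) (1 : ℤ)) : MvPolynomial (Fin d) ℤ) :
        MvPowerSeries (Fin d) ℤ) *
      hilbSeries w I

/-- Sum of the terms of lowest total degree of a polynomial. -/
noncomputable def lowestTerms {d : ℕ} (q : MvPolynomial (Fin d) ℤ) : MvPolynomial (Fin d) ℤ :=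
  ∑ a ∈ q.support.filter fun a => ∀ b ∈ q.support,
      (a.sum fun _ n => n) ≤ (b.sum fun _ n => n),
    MvPolynomial.monomial a (q.coeff a)

/-- The multidegree read off from a K-polynomial: the lowest-degree terms of `K(1 - t)`. -/
noncomputable def multidegOf {d : ℕ} (K : MvPolynomial (Fin d) ℤ) : MvPolynomial (Fin d) ℤ :=
  lowestTerms (MvPolynomial.aeval (fun i => (1 - MvPolynomial.X i : MvPolynomial (Fin d) ℤ)) K)

/-- The exponent of the polarization of the minimal generator `x^{g j}`, in the ring with
variables `x_{(i,k)}` for `i : Fin N`, `k : Fin (m i)`: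
`∏_i ∏_{k < (g j) i} x_{(i,k)}`. -/
noncomputable def polarExpFin {N s : ℕ} (g : Fin s → (Fin N →₀ ℕ)) (m : Fin N → ℕ)
    (j : Fin s) : ((i : Fin N) × Fin (m i)) →₀ ℕ :=
  ∑ v : (i : Fin N) × Fin (m i),
    if (v.2 : ℕ) < g j v.1 then Finsupp.single v 1 else 0


namespace PolarAux
open MvPolynomial
variable {τ : Type*} [Fintype τ] {d : ℕ}
set_option linter.unusedSectionVars false

/-- The finset of exponent vectors of weight `a`. -/
noncomputable def mons (w : τ → (Fin d →₀ ℕ)) (a : Fin d →₀ ℕ) : Finset (τ →₀ ℕ) :=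
  (Finset.Iic (Finsupp.equivFunOnFinite.symm fun _ : τ => a.sum fun _ n => n)).filter
    fun e => Finsupp.weight w e = a

lemma le_total_sum (a : Fin d →₀ ℕ) (c : Fin d) : a c ≤ a.sum fun _ n => n := by
  rw [Finsupp.sum]
  by_cases h : c ∈ a.support
  · exact Finset.single_le_sum (fun _ _ => Nat.zero_le _) h
  · simp [Finsupp.notMem_support_iff.mp h]

lemma mem_mons {w : τ → (Fin d →₀ ℕ)} (hpos : ∀ i, w i ≠ 0) {a e : _} :
    e ∈ mons w a ↔ Finsupp.weight w e = a := by
  constructor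
  · intro h; exact (Finset.mem_filter.mp h).2
  · intro h
    refine Finset.mem_filter.mpr ⟨Finset.mem_Iic.mpr ?_, h⟩
    intro i
    obtain ⟨c, hc⟩ := Finsupp.ne_iff.mp (hpos i)
    simp only [Finsupp.coe_zero, Pi.zero_apply] at hc
    have h1 : e i * w i c ≤ (Finsupp.weight w e) c := by
      rw [Finsupp.weight_apply, Finsupp.sum_apply]
      by_cases hi : i ∈ e.support
      · have := Finset.single_le_sum
          (f := fun i' => (e i' • w i') c) (fun _ _ => Nat.zero_le _) hi
        simpa [Finsupp.sum] using this
      · simp [Finsupp.notMem_support_iff.mp hi]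
    have h2 : e i ≤ e i * w i c := Nat.le_mul_of_pos_right _ (Nat.pos_of_ne_zero hc)
    have h3 : (Finsupp.weight w e) c ≤ a.sum fun _ n => n := h ▸ le_total_sum a c
    calc e i ≤ (Finsupp.weight w e) c := le_trans h2 h1
    _ ≤ a.sum fun _ n => n := h3
    _ = (Finsupp.equivFunOnFinite.symm fun _ : τ => a.sum fun _ n => n) i := by simp

lemma weight_mono {w : τ → (Fin d →₀ ℕ)} {b e : τ →₀ ℕ} (h : b ≤ e) :
    Finsupp.weight w b ≤ Finsupp.weight w e := by
  have : e = (e - b) + b := (tsub_add_cancel_of_le h).symm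
  rw [this, map_add]; exact le_add_self

lemma card_shift {w : τ → (Fin d →₀ ℕ)} (hpos : ∀ i, w i ≠ 0) (b : τ →₀ ℕ) (a : Fin d →₀ ℕ) :
    (if Finsupp.weight w b ≤ a then ((mons w (a - Finsupp.weight w b)).card : ℤ) else 0)
      = (((mons w a).filter fun e => b ≤ e).card : ℤ) := by
  split_ifs with h
  · norm_cast
    apply Finset.card_bij (fun e _ => e + b)
    · intro e he
      refine Finset.mem_filter.mpr ⟨(mem_mons hpos).mpr ?_, le_add_self⟩
      rw [map_add, (mem_mons hpos).mp he, tsub_add_cancel_of_le h]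
    · intro e₁ h₁ e₂ h₂ hh
      exact add_right_cancel hh
    · intro f hf
      obtain ⟨hf1, hf2⟩ := Finset.mem_filter.mp hf
      refine ⟨f - b, ?_, tsub_add_cancel_of_le hf2⟩
      rw [mem_mons hpos]
      have : f = (f - b) + b := (tsub_add_cancel_of_le hf2).symm
      have hw : Finsupp.weight w f = Finsupp.weight w (f - b) + Finsupp.weight w b := by
        conv_lhs => rw [this]
        rw [map_add]
      rw [(mem_mons hpos).mp hf1] at hw
      exact (eq_tsub_of_add_eq hw.symm)
  · symm
    norm_cast
    rw [Finset.card_eq_zero, Finset.filter_eq_empty_iff]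
    intro e he hbe
    exact h (((mem_mons hpos).mp he) ▸ weight_mono hbe)

noncomputable def FF (w : τ → (Fin d →₀ ℕ)) : MvPowerSeries (Fin d) ℤ :=
  fun a => ((mons w a).card : ℤ)

noncomputable def stdS {ι : Type*} (w : τ → (Fin d →₀ ℕ)) (c : ι → (τ →₀ ℕ)) :
    MvPowerSeries (Fin d) ℤ :=
  fun a => ((((mons w a).filter fun e => ∀ j, ¬ c j ≤ e).card : ℤ))

/-- the alternating-sum polynomial attached to a family of exponents -/
noncomputable def Ppoly {ι : Type*} [Fintype ι] (w : τ → (Fin d →₀ ℕ)) (c : ι → (τ →₀ ℕ)) :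
    MvPolynomial (Fin d) ℤ :=
  ∑ S : Finset ι, MvPolynomial.monomial (Finsupp.weight w (S.sup c)) ((-1 : ℤ) ^ S.card)

lemma core {ι : Type*} [Fintype ι] {w : τ → (Fin d →₀ ℕ)} (hpos : ∀ i, w i ≠ 0)
    (c : ι → (τ →₀ ℕ)) :
    ((Ppoly w c : MvPolynomial (Fin d) ℤ) : MvPowerSeries (Fin d) ℤ) *
        FF w =
      stdS w c := by
  apply MvPowerSeries.ext
  intro a
  have hcoe : ((Ppoly w c : MvPolynomial (Fin d) ℤ) : MvPowerSeries (Fin d) ℤ)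
      = ∑ S : Finset ι, MvPowerSeries.monomial (Finsupp.weight w (S.sup c)) ((-1 : ℤ) ^ S.card) := by
    rw [Ppoly, ← MvPolynomial.coeToMvPowerSeries.ringHom_apply, map_sum]
    simp [MvPolynomial.coeToMvPowerSeries.ringHom_apply, MvPolynomial.coe_monomial]
  rw [hcoe, Finset.sum_mul, map_sum]
  have hterm : ∀ S : Finset ι,
      (MvPowerSeries.coeff a) ((MvPowerSeries.monomial (Finsupp.weight w (S.sup c))
          ((-1 : ℤ) ^ S.card)) * FF w)
        = (-1 : ℤ) ^ S.card * (((mons w a).filter fun e => S.sup c ≤ e).card : ℤ) := by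
    intro S
    rw [MvPowerSeries.coeff_monomial_mul, ← card_shift hpos (S.sup c) a]
    split_ifs with h
    · rfl
    · ring
  rw [Finset.sum_congr rfl (fun S _ => hterm S)]
  have hinner : ∀ e : τ →₀ ℕ,
      (∑ S : Finset ι, (-1:ℤ)^S.card * (if S.sup c ≤ e then (1:ℤ) else 0))
        = if (∀ j, ¬ c j ≤ e) then 1 else 0 := by
    intro e
    set A := Finset.univ.filter (fun j => c j ≤ e) with hA
    have h1 : ∀ S : Finset ι, (S.sup c ≤ e) ↔ S ⊆ A := by
      intro S
      rw [Finset.sup_le_iff]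
      constructor
      · intro h j hj; exact Finset.mem_filter.mpr ⟨Finset.mem_univ _, h j hj⟩
      · intro h j hj; exact (Finset.mem_filter.mp (h hj)).2
    calc (∑ S : Finset ι, (-1:ℤ)^S.card * (if S.sup c ≤ e then (1:ℤ) else 0))
        = ∑ S : Finset ι, (if S ⊆ A then ((-1:ℤ)^S.card) else 0) := by
          refine Finset.sum_congr rfl fun S _ => ?_
          rw [mul_ite, mul_one, mul_zero, if_congr (h1 S) rfl rfl]
      _ = ∑ S ∈ Finset.univ.filter (fun S => S ⊆ A), (-1:ℤ)^S.card :=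
          (Finset.sum_filter _ _).symm
      _ = ∑ S ∈ A.powerset, (-1:ℤ)^S.card := by
          congr 1; ext S; simp [Finset.mem_powerset]
      _ = if A = ∅ then 1 else 0 := Finset.sum_powerset_neg_one_pow_card
      _ = if (∀ j, ¬ c j ≤ e) then 1 else 0 := by
          congr 1
          simp only [hA, eq_iff_iff, Finset.filter_eq_empty_iff, Finset.mem_univ,
            true_implies]
  calc (∑ S : Finset ι, (-1:ℤ)^S.card * (((mons w a).filter fun e => S.sup c ≤ e).card : ℤ))
      = ∑ S : Finset ι, ∑ e ∈ mons w a, (-1:ℤ)^S.card * (if S.sup c ≤ e then (1:ℤ) else 0) := by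
        refine Finset.sum_congr rfl fun S _ => ?_
        simp only [Finset.card_filter, Nat.cast_sum, Nat.cast_ite, Nat.cast_one,
          Nat.cast_zero, Finset.mul_sum]
    _ = ∑ e ∈ mons w a, ∑ S : Finset ι, (-1:ℤ)^S.card * (if S.sup c ≤ e then (1:ℤ) else 0) :=
        Finset.sum_comm
    _ = ∑ e ∈ mons w a, if (∀ j, ¬ c j ≤ e) then (1:ℤ) else 0 :=
        Finset.sum_congr rfl fun e _ => hinner e
    _ = (MvPowerSeries.coeff a) (stdS w c) := by
        have h0 : (MvPowerSeries.coeff a) (stdS w c)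
            = ((((mons w a).filter fun e => ∀ j, ¬ c j ≤ e).card : ℤ)) := by
          rw [MvPowerSeries.coeff_apply]; unfold stdS; congr!
        rw [h0]
        simp only [Finset.card_filter, Nat.cast_sum, Nat.cast_ite, Nat.cast_one, Nat.cast_zero]

lemma finsetSup_apply {ι κ : Type*} (f : ι → (κ →₀ ℕ)) (T : Finset ι) (x : κ) :
    (T.sup f) x = T.sup fun v => f v x := by
  induction T using Finset.induction with
  | empty => simp [Finsupp.bot_eq_zero]
  | insert _ _ h ih => rw [Finset.sup_insert, Finset.sup_insert, Finsupp.sup_apply, ih]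

lemma sup_single_apply (T : Finset τ) (i : τ) :
    (T.sup fun v => Finsupp.single v (1 : ℕ)) i = if i ∈ T then 1 else 0 := by
  rw [finsetSup_apply]
  split_ifs with h
  · refine le_antisymm (Finset.sup_le fun v _ => ?_) ?_
    · rw [Finsupp.single_apply]; split_ifs <;> simp
    · have := Finset.le_sup (f := fun v => Finsupp.single v (1:ℕ) i) h
      simpa [Finsupp.single_apply] using this
  · refine Nat.le_zero.mp (Finset.sup_le fun v hv => ?_)
    rw [Finsupp.single_apply, if_neg (fun hh : v = i => h (hh ▸ hv))]

lemma weight_sup_single (w : τ → (Fin d →₀ ℕ)) (T : Finset τ) :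
    Finsupp.weight w (T.sup fun v => Finsupp.single v (1 : ℕ)) = ∑ v ∈ T, w v := by
  rw [Finsupp.weight_apply, Finsupp.sum_fintype _ _ (fun i => by simp)]
  have : ∀ i : τ, ((T.sup fun v => Finsupp.single v (1 : ℕ)) i) • w i
      = if i ∈ T then w i else 0 := by
    intro i
    rw [sup_single_apply]
    split_ifs <;> simp
  rw [Finset.sum_congr rfl fun i _ => this i]
  simp [Finset.sum_ite_mem]

lemma prod_monomial (w : τ → (Fin d →₀ ℕ)) (T : Finset τ) :
    (∏ v ∈ T, MvPolynomial.monomial (w v) (-1 : ℤ))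
      = MvPolynomial.monomial (∑ v ∈ T, w v) ((-1 : ℤ) ^ T.card) := by
  induction T using Finset.induction with
  | empty => simp
  | insert _ _ h ih =>
      rw [Finset.prod_insert h, ih, MvPolynomial.monomial_mul, Finset.sum_insert h,
        Finset.card_insert_of_notMem h]
      congr 1
      ring

lemma Q_expand (w : τ → (Fin d →₀ ℕ)) :
    (∏ v : τ, (1 - MvPolynomial.monomial (w v) (1 : ℤ)))
      = Ppoly w (fun i : τ => Finsupp.single i (1 : ℕ)) := by
  have h1 : ∀ v : τ, (1 - MvPolynomial.monomial (w v) (1 : ℤ))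
      = MvPolynomial.monomial (w v) (-1 : ℤ) + 1 := by
    intro v
    rw [map_neg, neg_add_eq_sub]
  rw [Finset.prod_congr rfl fun v _ => h1 v, Finset.prod_add]
  rw [Ppoly]
  rw [← Finset.powerset_univ]
  refine Finset.sum_congr rfl fun T hT => ?_
  rw [prod_monomial, Finset.prod_const_one, mul_one, weight_sup_single]

lemma stdS_singles {w : τ → (Fin d →₀ ℕ)} (hpos : ∀ i, w i ≠ 0) :
    stdS w (fun i : τ => Finsupp.single i (1 : ℕ)) = 1 := by
  apply MvPowerSeries.ext
  intro a
  have h0 : (MvPowerSeries.coeff a) (stdS w (fun i : τ => Finsupp.single i (1 : ℕ)))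
      = ((((mons w a).filter fun e => ∀ v : τ, ¬ Finsupp.single v (1:ℕ) ≤ e).card : ℤ)) := by
    rw [MvPowerSeries.coeff_apply]; unfold stdS; congr!
  rw [h0, MvPowerSeries.coeff_one]
  have hiff : ∀ e : τ →₀ ℕ, (∀ v : τ, ¬ Finsupp.single v (1:ℕ) ≤ e) ↔ e = 0 := by
    intro e
    constructor
    · intro h
      ext v
      have := h v
      rw [Finsupp.single_le_iff] at this
      simp only [Finsupp.coe_zero, Pi.zero_apply]
      omega
    · rintro rfl v
      rw [Finsupp.single_le_iff]
      simp
  rw [Finset.filter_congr fun e _ => hiff e, Finset.filter_eq']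
  split_ifs with h1 h2 h2
  · simp
  · exact absurd ((mem_mons hpos).mp h1) (by simpa [eq_comm] using h2)
  · exact absurd ((mem_mons hpos).mpr (by simp [h2])) h1
  · simp

lemma mgradedDim_eq {ι : Type*} {w : τ → (Fin d →₀ ℕ)} (hpos : ∀ i, w i ≠ 0)
    (g : ι → (τ →₀ ℕ)) {I : Ideal (MvPolynomial τ ℂ)}
    (hgen : I = Ideal.span (Set.range fun j => MvPolynomial.monomial (g j) (1 : ℂ)))
    (a : Fin d →₀ ℕ) :
    mgradedDim w I a = ((mons w a).filter fun e => ∀ j, ¬ g j ≤ e).card := by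
  have memI : ∀ x : MvPolynomial τ ℂ, x ∈ I ↔ ∀ m ∈ x.support, ∃ j, g j ≤ m := by
    intro x
    have : I = Ideal.span ((fun e => MvPolynomial.monomial e (1 : ℂ)) '' Set.range g) := by
      rw [hgen, ← Set.range_comp]; rfl
    rw [this, MvPolynomial.mem_ideal_span_monomial_image]
    simp
  set E : Finset (τ →₀ ℕ) := (mons w a).filter fun e => ∀ j, ¬ g j ≤ e with hE
  set fam : ↥E → (MvPolynomial τ ℂ ⧸ I) :=
    fun e => Ideal.Quotient.mk I (MvPolynomial.monomial (e : τ →₀ ℕ) (1 : ℂ)) with hfam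
  have hmemE : ∀ e : τ →₀ ℕ, e ∈ E ↔ (Finsupp.weight w e = a ∧ ∀ j, ¬ g j ≤ e) := by
    intro e
    rw [hE, Finset.mem_filter, mem_mons hpos]
  have hspan : (MvPolynomial.weightedHomogeneousSubmodule ℂ w a).map
      (Ideal.Quotient.mkₐ ℂ I).toLinearMap = Submodule.span ℂ (Set.range fam) := by
    have h1 : MvPolynomial.weightedHomogeneousSubmodule ℂ w a
        = Submodule.span ℂ ((fun e => MvPolynomial.monomial e (1 : ℂ)) ''
            {e | Finsupp.weight w e = a}) := by
      rw [MvPolynomial.weightedHomogeneousSubmodule_eq_finsupp_supported,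
        AddMonoidAlgebra.supported_eq_span_single]
      congr 1
    rw [h1, Submodule.map_span, Set.image_image]
    apply le_antisymm
    · rw [Submodule.span_le]
      rintro x ⟨e, he, rfl⟩
      by_cases hstd : ∀ j, ¬ g j ≤ e
      · exact Submodule.subset_span ⟨⟨e, (hmemE e).mpr ⟨he, hstd⟩⟩, by
          simp [hfam, Ideal.Quotient.mkₐ_eq_mk]⟩
      · push_neg at hstd
        have hxI : MvPolynomial.monomial e (1 : ℂ) ∈ I := by
          rw [memI]
          intro m hm
          rw [MvPolynomial.support_monomial, if_neg one_ne_zero] at hm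
          obtain rfl : m = e := Finset.mem_singleton.mp hm
          exact hstd
        show (Ideal.Quotient.mkₐ ℂ I).toLinearMap (MvPolynomial.monomial e (1 : ℂ)) ∈ _
        have : (Ideal.Quotient.mkₐ ℂ I).toLinearMap (MvPolynomial.monomial e (1 : ℂ)) = 0 := by
          simp only [AlgHom.toLinearMap_apply, Ideal.Quotient.mkₐ_eq_mk]
          exact Ideal.Quotient.eq_zero_iff_mem.mpr hxI
        rw [this]
        exact Submodule.zero_mem _
    · rw [Submodule.span_le]
      rintro x ⟨e, rfl⟩
      refine Submodule.subset_span ⟨(e : τ →₀ ℕ), ((hmemE e).mp e.2).1, ?_⟩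
      simp [hfam, Ideal.Quotient.mkₐ_eq_mk]
  have hli : LinearIndependent ℂ fam := by
    rw [linearIndependent_iff']
    intro t q hsum e₁ he₁
    set p : MvPolynomial τ ℂ := ∑ e ∈ t, MvPolynomial.monomial (e : τ →₀ ℕ) (q e) with hp
    have hmk : Ideal.Quotient.mk I p = 0 := by
      rw [hp, map_sum, ← hsum]
      refine Finset.sum_congr rfl fun e _ => ?_
      calc (Ideal.Quotient.mk I) (MvPolynomial.monomial (e : τ →₀ ℕ) (q e))
          = (Ideal.Quotient.mkₐ ℂ I) (q e • MvPolynomial.monomial (e : τ →₀ ℕ) (1 : ℂ)) := by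
            rw [MvPolynomial.smul_monomial, smul_eq_mul, mul_one, Ideal.Quotient.mkₐ_eq_mk]
        _ = q e • fam e := by
            rw [map_smul]; simp [hfam, Ideal.Quotient.mkₐ_eq_mk]
    have hpI : p ∈ I := Ideal.Quotient.eq_zero_iff_mem.mp hmk
    have hp0 : p = 0 := by
      by_contra hne
      obtain ⟨m, hm⟩ := Finset.nonempty_of_ne_empty
        (fun h => hne (MvPolynomial.support_eq_empty.mp h))
      obtain ⟨j, hj⟩ := (memI p).mp hpI m hm
      have : m ∈ t.biUnion fun e => (MvPolynomial.monomial (e : τ →₀ ℕ) (q e)).support :=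
        MvPolynomial.support_sum hm
      obtain ⟨e, het, hme⟩ := Finset.mem_biUnion.mp this
      have hme' : m = (e : τ →₀ ℕ) := by
        by_cases hq : q e = 0
        · simp [hq] at hme
        · rw [MvPolynomial.support_monomial, if_neg hq] at hme
          exact Finset.mem_singleton.mp hme
      exact ((hmemE e).mp e.2).2 j (hme' ▸ hj)
    have : MvPolynomial.coeff (e₁ : τ →₀ ℕ) p = q e₁ := by
      rw [hp, MvPolynomial.coeff_sum]
      rw [Finset.sum_eq_single_of_mem e₁ he₁]
      · rw [MvPolynomial.coeff_monomial, if_pos rfl]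
      · intro e het hne
        rw [MvPolynomial.coeff_monomial, if_neg (fun h => hne (Subtype.coe_injective h))]
    rw [hp0] at this
    simpa using this.symm
  rw [mgradedDim, hspan, finrank_span_eq_card hli, Fintype.card_coe]

lemma K_eq_Ppoly {ι : Type*} [Fintype ι] {w : τ → (Fin d →₀ ℕ)} (hpos : ∀ i, w i ≠ 0)
    (g : ι → (τ →₀ ℕ)) {I : Ideal (MvPolynomial τ ℂ)}
    (hgen : I = Ideal.span (Set.range fun j => MvPolynomial.monomial (g j) (1 : ℂ)))
    {K : MvPolynomial (Fin d) ℤ} (hK : IsKPolynomial w I K) :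
    K = Ppoly w g := by
  have hhs : hilbSeries w I = stdS w g := by
    funext a
    show ((mgradedDim w I a : ℤ)) = _
    rw [mgradedDim_eq hpos g hgen a]
    unfold stdS
    congr!
  apply MvPolynomial.coe_injective
  calc (K : MvPowerSeries (Fin d) ℤ)
      = ((∏ v : τ, (1 - MvPolynomial.monomial (w v) (1 : ℤ)) : MvPolynomial (Fin d) ℤ) :
          MvPowerSeries (Fin d) ℤ) * hilbSeries w I := hK
    _ = ((Ppoly w (fun i : τ => Finsupp.single i (1 : ℕ)) : MvPolynomial (Fin d) ℤ) :
          MvPowerSeries (Fin d) ℤ) *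
        (((Ppoly w g : MvPolynomial (Fin d) ℤ) : MvPowerSeries (Fin d) ℤ) * FF w) := by
        rw [hhs, Q_expand, core hpos g]
    _ = ((Ppoly w g : MvPolynomial (Fin d) ℤ) : MvPowerSeries (Fin d) ℤ) *
        (((Ppoly w (fun i : τ => Finsupp.single i (1 : ℕ)) : MvPolynomial (Fin d) ℤ) :
          MvPowerSeries (Fin d) ℤ) * FF w) := by ring
    _ = ((Ppoly w g : MvPolynomial (Fin d) ℤ) : MvPowerSeries (Fin d) ℤ) := by
        rw [core hpos _, stdS_singles hpos, mul_one]

end PolarAux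

namespace PolarAux
open MvPolynomial
set_option linter.unusedSectionVars false
variable {N s d : ℕ}

lemma polarExpFin_apply (g : Fin s → (Fin N →₀ ℕ)) (m : Fin N → ℕ) (j : Fin s)
    (v : (i : Fin N) × Fin (m i)) :
    polarExpFin g m j v = if (v.2 : ℕ) < g j v.1 then 1 else 0 := by
  rw [polarExpFin, Finset.sum_apply']
  rw [Finset.sum_eq_single v]
  · split_ifs with h
    · simp [Finsupp.single_apply]
    · simp
  · intro v' _ hne
    split_ifs with h
    · rw [Finsupp.single_apply, if_neg hne]
    · rfl
  · intro h
    exact absurd (Finset.mem_univ v) h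

lemma sup_ite_nat {ι : Type*} (S : Finset ι) (f : ι → ℕ) (k : ℕ) :
    (S.sup fun j => if k < f j then (1:ℕ) else 0) = if k < S.sup f then 1 else 0 := by
  split_ifs with h
  · obtain ⟨j0, hj0, hk⟩ := Finset.lt_sup_iff.mp h
    refine le_antisymm (Finset.sup_le fun v _ => by split_ifs <;> simp) ?_
    calc 1 = if k < f j0 then (1:ℕ) else 0 := by rw [if_pos hk]
    _ ≤ S.sup fun j => if k < f j then (1:ℕ) else 0 :=
        Finset.le_sup (f := fun j => if k < f j then (1:ℕ) else 0) hj0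
  · refine Nat.le_zero.mp (Finset.sup_le fun j hj => ?_)
    rw [if_neg]
    intro hk
    exact h (lt_of_lt_of_le hk (Finset.le_sup hj))

lemma sup_polar_apply (g : Fin s → (Fin N →₀ ℕ)) (m : Fin N → ℕ) (S : Finset (Fin s))
    (v : (i : Fin N) × Fin (m i)) :
    (S.sup (polarExpFin g m)) v = if (v.2 : ℕ) < (S.sup g) v.1 then 1 else 0 := by
  rw [finsetSup_apply]
  have h1 : (S.sup fun j => polarExpFin g m j v)
      = S.sup fun j => if (v.2 : ℕ) < g j v.1 then 1 else 0 := by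
    refine Finset.sup_congr rfl fun j _ => polarExpFin_apply g m j v
  rw [h1, sup_ite_nat, finsetSup_apply]

lemma count_lt (M c : ℕ) (hc : c ≤ M) :
    (∑ k : Fin M, if (k : ℕ) < c then (1:ℕ) else 0) = c := by
  rw [Fin.sum_univ_eq_sum_range (fun x => if x < c then (1:ℕ) else 0) M]
  rw [← Finset.card_filter]
  have : (Finset.range M).filter (fun x => x < c) = Finset.range c := by
    ext x
    simp only [Finset.mem_filter, Finset.mem_range]
    omega
  rw [this, Finset.card_range]

lemma weight_polar_sup (w : Fin N → (Fin d →₀ ℕ)) (g : Fin s → (Fin N →₀ ℕ))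
    (m : Fin N → ℕ) (hm : ∀ i, m i = Finset.univ.sup fun j : Fin s => g j i)
    (S : Finset (Fin s)) :
    Finsupp.weight (fun v : (i : Fin N) × Fin (m i) => w v.1) (S.sup (polarExpFin g m))
      = Finsupp.weight w (S.sup g) := by
  rw [Finsupp.weight_apply, Finsupp.sum_fintype _ _ (fun v => by simp),
    Finsupp.weight_apply, Finsupp.sum_fintype _ _ (fun i => by simp)]
  have huniv : (Finset.univ : Finset ((i : Fin N) × Fin (m i)))
      = Finset.univ.sigma fun _ => Finset.univ := by
    ext v; simp [Finset.mem_sigma]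
  rw [huniv, Finset.sum_sigma]
  refine Finset.sum_congr rfl fun i _ => ?_
  have hc : (S.sup g) i ≤ m i := by
    rw [finsetSup_apply, hm i]
    exact Finset.sup_mono (Finset.subset_univ S)
  calc (∑ k : Fin (m i), (S.sup (polarExpFin g m)) ⟨i, k⟩ • w (⟨i, k⟩ : (i : Fin N) × Fin (m i)).1)
      = ∑ k : Fin (m i), (if (k : ℕ) < (S.sup g) i then (1:ℕ) else 0) • w i := by
        refine Finset.sum_congr rfl fun k _ => ?_
        rw [sup_polar_apply]
    _ = (∑ k : Fin (m i), if (k : ℕ) < (S.sup g) i then (1:ℕ) else 0) • w i := by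
        rw [Finset.sum_smul]
    _ = (S.sup g) i • w i := by rw [count_lt _ _ hc]

lemma Ppoly_polar (w : Fin N → (Fin d →₀ ℕ)) (g : Fin s → (Fin N →₀ ℕ))
    (m : Fin N → ℕ) (hm : ∀ i, m i = Finset.univ.sup fun j : Fin s => g j i) :
    Ppoly (fun v : (i : Fin N) × Fin (m i) => w v.1) (polarExpFin g m) = Ppoly w g := by
  rw [Ppoly, Ppoly]
  refine Finset.sum_congr rfl fun S _ => ?_
  rw [weight_polar_sup w g m hm S]

end PolarAux

/-- Polarization preserves the multigraded K-polynomial, and in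
particular the multidegree. -/
theorem polarization_preserves_kpolynomial {N s d : ℕ}
    (w : Fin N → (Fin d →₀ ℕ)) (hpos : ∀ i, w i ≠ 0)
    (g : Fin s → (Fin N →₀ ℕ))
    (I : Ideal (MvPolynomial (Fin N) ℂ))
    (hgen : I = Ideal.span (Set.range fun j => MvPolynomial.monomial (g j) (1 : ℂ)))
    (hmin : ∀ j k : Fin s, g j ≤ g k → j = k)
    (m : Fin N → ℕ) (hm : ∀ i, m i = Finset.univ.sup fun j : Fin s => g j i)
    (Itil : Ideal (MvPolynomial ((i : Fin N) × Fin (m i)) ℂ))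
    (hItil : Itil = Ideal.span
      (Set.range fun j => MvPolynomial.monomial (polarExpFin g m j) (1 : ℂ)))
    (K Ktil : MvPolynomial (Fin d) ℤ)
    (hK : IsKPolynomial w I K)
    (hKtil : IsKPolynomial (fun v : (i : Fin N) × Fin (m i) => w v.1) Itil Ktil) :
    K = Ktil ∧ multidegOf K = multidegOf Ktil := by
  have hpos2 : ∀ v : (i : Fin N) × Fin (m i), (fun v : (i : Fin N) × Fin (m i) => w v.1) v ≠ 0 :=
    fun v => hpos v.1
  have h1 : K = PolarAux.Ppoly w g := PolarAux.K_eq_Ppoly hpos g hgen hK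
  have h2 : Ktil = PolarAux.Ppoly (fun v : (i : Fin N) × Fin (m i) => w v.1) (polarExpFin g m) :=
    PolarAux.K_eq_Ppoly hpos2 (polarExpFin g m) hItil hKtil
  have h3 : K = Ktil := by
    rw [h1, h2, PolarAux.Ppoly_polar w g m hm]
  exact ⟨h3, by rw [h3]⟩
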